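/- Under the same weight-separation assumption, any minimum spanning tree of G contains exactly S - 1 inter-cluster edges, where S is the number of clusters; equivalently, removing the inter-cluster edges of the MST disconnects it into exactly the S clusters. -/

import Mathlib

open SimpleGraph

private lemma inter_pair_iff {V C : Type*} (cluster : V → C) (x y : V) :
    (∃ u v : V, s(x, y) = s(u, v) ∧ cluster u ≠ cluster v) ↔ cluster x ≠ cluster y := by
  constructor
  · rintro ⟨u, v, he, hne⟩
    rcases Sym2.eq_iff.mp he with ⟨rfl, rfl⟩ | ⟨rfl, rfl⟩
    · exact hne
    · exact hne.symm
  · intro h; exact ⟨x, y, rfl, h⟩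

private lemma walk_side {V : Type*} {T : SimpleGraph V} (p q : V) :
    ∀ {x y : V}, T.Walk x y →
      (T.deleteEdges {s(p, q)}).Reachable x y ∨
      ((T.deleteEdges {s(p, q)}).Reachable x p ∧ (T.deleteEdges {s(p, q)}).Reachable y q) ∨
      ((T.deleteEdges {s(p, q)}).Reachable x q ∧ (T.deleteEdges {s(p, q)}).Reachable y p) := by
  intro x y W
  induction W with
  | nil => exact Or.inl (Reachable.refl _)
  | @cons u v z h W ih =>
    by_cases he : s(u, v) = s(p, q)
    · rcases Sym2.eq_iff.mp he with ⟨rfl, rfl⟩ | ⟨rfl, rfl⟩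
      · rcases ih with h1 | ⟨h1, h2⟩ | ⟨h1, h2⟩
        · exact Or.inr (Or.inl ⟨Reachable.refl _, h1.symm⟩)
        · exact Or.inr (Or.inl ⟨Reachable.refl _, h2⟩)
        · exact Or.inl h2.symm
      · rcases ih with h1 | ⟨h1, h2⟩ | ⟨h1, h2⟩
        · exact Or.inr (Or.inr ⟨Reachable.refl _, h1.symm⟩)
        · exact Or.inl h2.symm
        · exact Or.inr (Or.inr ⟨Reachable.refl _, h2⟩)
    · have hadj : (T.deleteEdges {s(p, q)}).Adj u v := by
        rw [deleteEdges_adj]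
        exact ⟨h, by simpa using he⟩
      rcases ih with h1 | ⟨h1, h2⟩ | ⟨h1, h2⟩
      · exact Or.inl (hadj.reachable.trans h1)
      · exact Or.inr (Or.inl ⟨hadj.reachable.trans h1, h2⟩)
      · exact Or.inr (Or.inr ⟨hadj.reachable.trans h1, h2⟩)

private lemma side_of_walk {V : Type*} {T : SimpleGraph V} {p q x : V} (W : T.Walk x p) :
    (T.deleteEdges {s(p, q)}).Reachable x p ∨ (T.deleteEdges {s(p, q)}).Reachable x q := by
  rcases walk_side p q W with h1 | ⟨h1, _⟩ | ⟨h1, _⟩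
  · exact Or.inl h1
  · exact Or.inl h1
  · exact Or.inr h1

private lemma card_toFinset_edge {V : Type*} [Fintype V] (H : SimpleGraph V) (ht : H.IsTree) :
    H.edgeSet.toFinite.toFinset.card + 1 = Fintype.card V := by
  haveI : Fintype H.edgeSet := H.edgeSet.toFinite.fintype
  have h := ht.card_edgeFinset
  have he : H.edgeSet.toFinite.toFinset = H.edgeFinset := by
    ext e
    rw [Set.Finite.mem_toFinset, SimpleGraph.mem_edgeFinset]
  rw [he]
  exact h

private lemma exchange_contra {V C : Type*} [Fintype V] [DecidableEq V]
    (G : SimpleGraph V) (cluster : V → C) (w : Sym2 V → ℝ)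
    (hsep : ∀ u v x z : V, G.Adj u v → G.Adj x z →
      cluster u = cluster v → cluster x ≠ cluster z → w s(u, v) < w s(x, z))
    (T : SimpleGraph V) (hTsub : T ≤ G) (hTtree : T.IsTree)
    (hMST : ∀ T' : SimpleGraph V, T' ≤ G → T'.IsTree →
      ∑ e ∈ T.edgeSet.toFinite.toFinset, w e ≤ ∑ e ∈ T'.edgeSet.toFinite.toFinset, w e)
    (p q a b : V) (hTpq : T.Adj p q) (hpq : cluster p ≠ cluster q)
    (hGab : G.Adj a b) (hab : cluster a = cluster b) (hnT : s(a, b) ∉ T.edgeSet)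
    (hap : (T.deleteEdges {s(p, q)}).Reachable a p)
    (hbq : (T.deleteEdges {s(p, q)}).Reachable b q) : False := by
  classical
  set D := T.deleteEdges {s(p, q)} with hD
  set T2 := D ⊔ SimpleGraph.fromEdgeSet {s(a, b)} with hT2
  have hne : a ≠ b := hGab.ne
  have hT2ab : T2.Adj a b := by
    rw [hT2, sup_adj, fromEdgeSet_adj]
    exact Or.inr ⟨rfl, hne⟩
  have hDle : D ≤ T := SimpleGraph.deleteEdges_le _
  have hT2G : T2 ≤ G := by
    rw [hT2]
    refine sup_le (le_trans hDle hTsub) ?_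
    intro x y hxy
    rw [fromEdgeSet_adj, Set.mem_singleton_iff] at hxy
    rcases Sym2.eq_iff.mp hxy.1 with ⟨rfl, rfl⟩ | ⟨rfl, rfl⟩
    · exact hGab
    · exact hGab.symm
  have hbr : ¬ D.Reachable p q := by
    have h1 := (SimpleGraph.isAcyclic_iff_forall_adj_isBridge.mp hTtree.2) hTpq
    rw [SimpleGraph.isBridge_iff] at h1
    exact h1
  have hreachp : ∀ z, T2.Reachable z p := by
    intro z
    obtain ⟨W⟩ := hTtree.1.preconnected z p
    rcases side_of_walk (q := q) W with h1 | h1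
    · exact h1.mono le_sup_left
    · exact ((h1.mono le_sup_left).trans ((hbq.mono le_sup_left).symm)).trans
        (hT2ab.symm.reachable.trans (hap.mono le_sup_left))
  have hT2conn : T2.Connected := by
    rw [connected_iff]
    exact ⟨fun x y => (hreachp x).trans (hreachp y).symm, ⟨a⟩⟩
  have hT2ac : T2.IsAcyclic := by
    intro v cw hcw
    by_cases hm : s(a, b) ∈ cw.edges
    · have hnb : ¬ T2.IsBridge s(a, b) := fun hbr' =>
        ((SimpleGraph.isBridge_iff_forall_cycle_notMem hT2ab).mp hbr' cw hcw) hm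
      rw [SimpleGraph.isBridge_iff] at hnb
      push_neg at hnb
      have hr : (T2 \ SimpleGraph.fromEdgeSet {s(a, b)}).Reachable a b := hnb
      have hle : (T2 \ SimpleGraph.fromEdgeSet {s(a, b)}) ≤ D := by
        intro x y hxy
        rcases hxy.1 with h1 | h1
        · exact h1
        · exact absurd h1 hxy.2
      exact hbr (hap.symm.trans ((hr.mono hle).trans hbq))
    · have hsub : ∀ e ∈ cw.edges, e ∈ T.edgeSet := by
        intro e he
        have h1 := cw.edges_subset_edgeSet he
        rw [hT2, SimpleGraph.edgeSet_sup] at h1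
        rcases h1 with h1 | h1
        · rw [hD, SimpleGraph.edgeSet_deleteEdges] at h1
          exact h1.1
        · rw [SimpleGraph.edgeSet_fromEdgeSet] at h1
          obtain ⟨h2, -⟩ := h1
          rw [Set.mem_singleton_iff] at h2
          exact absurd (h2 ▸ he) hm
      exact hTtree.2 (cw.transfer T hsub) (hcw.transfer hsub)
  have hFeq : T2.edgeSet.toFinite.toFinset
      = insert s(a, b) ((T.edgeSet.toFinite.toFinset).erase s(p, q)) := by
    ext e
    simp only [Set.Finite.mem_toFinset, Finset.mem_insert, Finset.mem_erase, hT2,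
      SimpleGraph.edgeSet_sup, hD, SimpleGraph.edgeSet_deleteEdges,
      SimpleGraph.edgeSet_fromEdgeSet, Set.mem_union, Set.mem_diff, Set.mem_singleton_iff,
      Set.mem_setOf_eq]
    constructor
    · rintro (⟨h1, h2⟩ | ⟨h1, h2⟩)
      · exact Or.inr ⟨h2, h1⟩
      · exact Or.inl h1
    · rintro (rfl | ⟨h1, h2⟩)
      · refine Or.inr ⟨rfl, ?_⟩
        simpa using hne
      · exact Or.inl ⟨h2, h1⟩
  have hninsert : s(a, b) ∉ (T.edgeSet.toFinite.toFinset).erase s(p, q) := by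
    intro h
    exact hnT (by simpa [Set.Finite.mem_toFinset] using Finset.mem_of_mem_erase h)
  have hpe : s(p, q) ∈ T.edgeSet.toFinite.toFinset := by
    rw [Set.Finite.mem_toFinset]; exact hTpq
  have hsum := hMST T2 hT2G ⟨hT2conn, hT2ac⟩
  rw [hFeq, Finset.sum_insert hninsert] at hsum
  have herase := Finset.add_sum_erase (T.edgeSet.toFinite.toFinset) w hpe
  have hlt : w s(a, b) < w s(p, q) := hsep a b p q hGab (hTsub hTpq) hab hpq
  linarith

private lemma intra_reachable {V C : Type*} [Fintype V] [DecidableEq V]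
    (G : SimpleGraph V) (cluster : V → C) (w : Sym2 V → ℝ)
    (hsep : ∀ u v x z : V, G.Adj u v → G.Adj x z →
      cluster u = cluster v → cluster x ≠ cluster z → w s(u, v) < w s(x, z))
    (T : SimpleGraph V) (hTsub : T ≤ G) (hTtree : T.IsTree)
    (hMST : ∀ T' : SimpleGraph V, T' ≤ G → T'.IsTree →
      ∑ e ∈ T.edgeSet.toFinite.toFinset, w e ≤ ∑ e ∈ T'.edgeSet.toFinite.toFinset, w e)
    (a b : V) (hGab : G.Adj a b) (hab : cluster a = cluster b) :
    (T.deleteEdges {e : Sym2 V | ∃ x z : V, e = s(x, z) ∧ cluster x ≠ cluster z}).Reachable a b := by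
  classical
  set Dset : Set (Sym2 V) := {e : Sym2 V | ∃ x z : V, e = s(x, z) ∧ cluster x ≠ cluster z}
    with hDset
  by_contra hR
  have habD : s(a, b) ∉ Dset := by
    rw [hDset, Set.mem_setOf_eq, inter_pair_iff cluster]
    simpa using hab
  have hnT : s(a, b) ∉ T.edgeSet := by
    intro h
    exact hR (SimpleGraph.Adj.reachable (by rw [deleteEdges_adj]; exact ⟨h, habD⟩))
  obtain ⟨P, hP, huniq⟩ := hTtree.existsUnique_path a b
  have hexists : ∃ e ∈ P.edges, e ∈ Dset := by
    by_contra h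
    push_neg at h
    have hsub : ∀ e ∈ P.edges, e ∈ (T.deleteEdges Dset).edgeSet := by
      intro e he
      rw [SimpleGraph.edgeSet_deleteEdges]
      exact ⟨P.edges_subset_edgeSet he, h e he⟩
    exact hR (P.transfer _ hsub).reachable
  obtain ⟨e₀, heP, x, z, rfl, hxz⟩ := hexists
  have hTxz : T.Adj x z := P.edges_subset_edgeSet heP
  have hsep_ab : ¬ (T.deleteEdges {s(x, z)}).Reachable a b := by
    rintro ⟨W⟩
    have hW : ∀ e ∈ W.edges, e ∈ T.edgeSet := by
      intro e he
      have h1 := W.edges_subset_edgeSet he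
      rw [SimpleGraph.edgeSet_deleteEdges] at h1
      exact h1.1
    have heq := huniq ((W.transfer T hW).toPath : T.Walk a b) ((W.transfer T hW).toPath.2)
    have hmem : s(x, z) ∈ ((W.transfer T hW).toPath : T.Walk a b).edges := by
      rw [heq]; exact heP
    have h2 : s(x, z) ∈ W.edges := by
      have h1 := SimpleGraph.Walk.edges_toPath_subset (W.transfer T hW) hmem
      rwa [SimpleGraph.Walk.edges_transfer] at h1
    have h3 := W.edges_subset_edgeSet h2
    rw [SimpleGraph.edgeSet_deleteEdges] at h3
    exact h3.2 rfl
  obtain ⟨Wa⟩ := hTtree.1.preconnected a x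
  obtain ⟨Wb⟩ := hTtree.1.preconnected b x
  have hswap : T.deleteEdges {s(z, x)} = T.deleteEdges {s(x, z)} := by
    rw [Sym2.eq_swap]
  rcases side_of_walk (q := z) Wa with ha1 | ha1 <;>
    rcases side_of_walk (q := z) Wb with hb1 | hb1
  · exact hsep_ab (ha1.trans hb1.symm)
  · exact exchange_contra G cluster w hsep T hTsub hTtree hMST x z a b hTxz hxz hGab hab hnT
      ha1 hb1
  · refine exchange_contra G cluster w hsep T hTsub hTtree hMST z x a b hTxz.symm
      (Ne.symm hxz) hGab hab hnT ?_ ?_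
    · rw [hswap]; exact ha1
    · rw [hswap]; exact hb1
  · exact hsep_ab (ha1.trans hb1.symm)

open Classical in
private lemma cluster_edge_count {V C : Type*} [Fintype V] [DecidableEq V] [DecidableEq C]
    (T : SimpleGraph V) (hac : T.IsAcyclic) (cluster : V → C) (c : C)
    (hconn : (T.induce {v : V | cluster v = c}).Preconnected)
    (hex : ∃ v, cluster v = c) :
    (T.edgeSet.toFinite.toFinset.filter
        (fun e => (¬ ∃ u v : V, e = s(u, v) ∧ cluster u ≠ cluster v)
          ∧ cluster (Quot.out e).1 = c)).card + 1
      = Fintype.card ↥{v : V | cluster v = c} := by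
  set S : Set V := {v : V | cluster v = c} with hS
  set Hc : SimpleGraph ↥S := T.induce S with hHc
  let hhom : Hc →g T := ⟨Subtype.val, fun h => h⟩
  have hHtree : Hc.IsTree := by
    constructor
    · rw [connected_iff]
      obtain ⟨v, hv⟩ := hex
      exact ⟨hconn, ⟨⟨v, hv⟩⟩⟩
    · intro v cw hcw
      exact hac (cw.map hhom) (hcw.map (fun _ _ h => Subtype.val_injective h))
  have hcard := card_toFinset_edge Hc hHtree
  rw [← hcard]
  congr 1
  refine Finset.card_bij (fun e _ => Sym2.map Subtype.val e) ?_ ?_ ?_ |>.symm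
  · intro e he
    induction e using Sym2.ind with
    | _ x y =>
      rw [Set.Finite.mem_toFinset, SimpleGraph.mem_edgeSet] at he
      have hadj : T.Adj ↑x ↑y := he
      have hcx : cluster ↑x = c := x.2
      have hcy : cluster ↑y = c := y.2
      simp only [Sym2.map_pair_eq, Finset.mem_filter, Set.Finite.mem_toFinset]
      refine ⟨hadj, ?_, ?_⟩
      · rw [inter_pair_iff cluster]
        simp [hcx, hcy]
      · have hm := Sym2.out_fst_mem s((x : V), (y : V))
        rw [Sym2.mem_iff] at hm
        rcases hm with hm | hm <;> rw [hm]
        · exact hcx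
        · exact hcy
  · intro e1 h1 e2 h2 h
    exact Sym2.map.injective Subtype.val_injective h
  · intro e he
    induction e using Sym2.ind with
    | _ x y =>
      rw [Finset.mem_filter, Set.Finite.mem_toFinset] at he
      obtain ⟨heT, hni, hc⟩ := he
      rw [inter_pair_iff cluster, not_not] at hni
      have hcx : cluster x = c := by
        have hm := Sym2.out_fst_mem s(x, y)
        rw [Sym2.mem_iff] at hm
        rcases hm with hm | hm
        · rwa [hm] at hc
        · rw [hm] at hc; exact hni.trans hc
      have hcy : cluster y = c := hni ▸ hcx
      refine ⟨s(⟨x, hcx⟩, ⟨y, hcy⟩), ?_, ?_⟩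
      · rw [Set.Finite.mem_toFinset, SimpleGraph.mem_edgeSet]
        exact heT
      · simp only [Sym2.map_pair_eq]

open Classical in
/-- Under the weight-separation assumption (all intra-cluster edge weights strictly smaller
than all inter-cluster edge weights, each cluster inducing a connected subgraph), any
minimum spanning tree `T` of the connected graph `G` contains exactly `S - 1` inter-cluster
edges, where `S` is the number of clusters; moreover, removing the inter-cluster edges of
`T` disconnects it into exactly the clusters. -/
theorem mst_inter_cluster_edges_count
    {V C : Type*} [Fintype V] [DecidableEq V] [Fintype C] [DecidableEq C]
    (G : SimpleGraph V) (hG : G.Connected)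
    (cluster : V → C) (hsurj : Function.Surjective cluster)
    (hcc : ∀ c : C, ((G.induce {v : V | cluster v = c}).Connected))
    (w : Sym2 V → ℝ)
    (hdistinct : ∀ e₁ ∈ G.edgeSet, ∀ e₂ ∈ G.edgeSet, e₁ ≠ e₂ → w e₁ ≠ w e₂)
    (hsep : ∀ u v x z : V, G.Adj u v → G.Adj x z →
      cluster u = cluster v → cluster x ≠ cluster z → w s(u, v) < w s(x, z))
    (T : SimpleGraph V) (hTsub : T ≤ G) (hTtree : T.IsTree)
    (hMST : ∀ T' : SimpleGraph V, T' ≤ G → T'.IsTree →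
      ∑ e ∈ T.edgeSet.toFinite.toFinset, w e ≤ ∑ e ∈ T'.edgeSet.toFinite.toFinset, w e) :
    (T.edgeSet.toFinite.toFinset.filter
        (fun e => ∃ u v : V, e = s(u, v) ∧ cluster u ≠ cluster v)).card
      = Fintype.card C - 1 ∧
    (∀ u v : V,
      (T.deleteEdges {e : Sym2 V | ∃ x z : V, e = s(x, z) ∧ cluster x ≠ cluster z}).Reachable u v
        ↔ cluster u = cluster v) := by
  classical
  set Dset : Set (Sym2 V) := {e : Sym2 V | ∃ x z : V, e = s(x, z) ∧ cluster x ≠ cluster z}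
    with hDset
  have hloc : ∀ a b : V, G.Adj a b → cluster a = cluster b →
      (T.deleteEdges Dset).Reachable a b :=
    fun a b hGab hab => intra_reachable G cluster w hsep T hTsub hTtree hMST a b hGab hab
  have key : ∀ (c : C) (x y : ↥{v : V | cluster v = c}),
      (G.induce {v : V | cluster v = c}).Walk x y → (T.deleteEdges Dset).Reachable ↑x ↑y := by
    intro c x y W
    induction W with
    | nil => exact Reachable.refl _
    | @cons u v' z h p ih =>
      exact (hloc ↑u ↑v' h (u.2.trans v'.2.symm)).trans ih
  have hforward : ∀ u v : V, cluster u = cluster v → (T.deleteEdges Dset).Reachable u v := by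
    intro u v huv
    obtain ⟨W⟩ := (hcc (cluster v)).preconnected ⟨u, huv⟩ ⟨v, rfl⟩
    exact key (cluster v) _ _ W
  have hback : ∀ u v : V, (T.deleteEdges Dset).Reachable u v → cluster u = cluster v := by
    intro u v hr
    obtain ⟨W⟩ := hr
    induction W with
    | nil => rfl
    | @cons u' v' z h p ih =>
      have h2 : cluster u' = cluster v' := by
        rw [deleteEdges_adj] at h
        have h3 := h.2
        simp only [hDset, Set.mem_setOf_eq, inter_pair_iff cluster, not_not] at h3
        exact h3
      exact h2.trans ih
  have hindpre : ∀ c : C, (T.induce {v : V | cluster v = c}).Preconnected := by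
    intro c x y
    obtain ⟨W⟩ := hforward ↑x ↑y (x.2.trans y.2.symm)
    suffices h : ∀ (a b : V) (W : (T.deleteEdges Dset).Walk a b)
        (ha : a ∈ {v : V | cluster v = c}) (hb : b ∈ {v : V | cluster v = c}),
        (T.induce {v : V | cluster v = c}).Reachable ⟨a, ha⟩ ⟨b, hb⟩ by
      exact h ↑x ↑y W x.2 y.2
    intro a b W
    induction W with
    | nil => intro ha hb; exact Reachable.refl _
    | @cons u' v' z h p ih =>
      intro hu hz
      have hcv : v' ∈ {v : V | cluster v = c} := by
        have h4 := hback u' v' h.reachable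
        exact h4.symm.trans hu
      have hadj : (T.induce {v : V | cluster v = c}).Adj ⟨u', hu⟩ ⟨v', hcv⟩ :=
        (SimpleGraph.deleteEdges_le _ h : T.Adj u' v')
      exact hadj.reachable.trans (ih hcv hz)
  refine ⟨?_, fun u v => ⟨hback u v, hforward u v⟩⟩
  set F := T.edgeSet.toFinite.toFinset with hF
  have hsplit := Finset.card_filter_add_card_filter_not
      (s := F) (p := fun e => ∃ u v : V, e = s(u, v) ∧ cluster u ≠ cluster v)
  have htree_card : F.card + 1 = Fintype.card V := card_toFinset_edge T hTtree
  have hfiber : (F.filter (fun e => ¬ ∃ u v : V, e = s(u, v) ∧ cluster u ≠ cluster v)).card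
      = ∑ c : C, ((F.filter (fun e => ¬ ∃ u v : V, e = s(u, v) ∧ cluster u ≠ cluster v)).filter
          (fun e => cluster (Quot.out e).1 = c)).card :=
    Finset.card_eq_sum_card_fiberwise (fun e _ => Finset.mem_univ _)
  have hper : ∀ c : C,
      ((F.filter (fun e => ¬ ∃ u v : V, e = s(u, v) ∧ cluster u ≠ cluster v)).filter
        (fun e => cluster (Quot.out e).1 = c)).card + 1
      = Fintype.card ↥{v : V | cluster v = c} := by
    intro c
    rw [Finset.filter_filter]
    exact cluster_edge_count T hTtree.2 cluster c (hindpre c) (hsurj c)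
  have hvert : ∑ c : C, Fintype.card ↥{v : V | cluster v = c} = Fintype.card V := by
    have h1 : ∀ c : C, Fintype.card ↥{v : V | cluster v = c}
        = (Finset.univ.filter (fun v => cluster v = c)).card := by
      intro c
      rw [← Set.toFinset_card, Set.toFinset_setOf]
    rw [Finset.sum_congr rfl (fun c _ => h1 c), ← Finset.card_univ]
    exact (Finset.card_eq_sum_card_fiberwise (fun v _ => Finset.mem_univ _)).symm
  have hintra : (F.filter (fun e => ¬ ∃ u v : V, e = s(u, v) ∧ cluster u ≠ cluster v)).card
      + Fintype.card C = Fintype.card V := by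
    rw [hfiber, ← hvert, ← Finset.sum_congr rfl (fun c _ => hper c),
      Finset.sum_add_distrib, Finset.sum_const, smul_eq_mul, mul_one, Finset.card_univ]
  omega
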